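/- (Interleaving theorem.) Let q, k, ℓ, t, n ≥ 1 be integers with t dividing k. If there exists an ℓ-valid (q,k)-colouring of n eBugs, then there exists a (t·ℓ)-valid (q, t·k)-colouring of N eBugs, where N is the natural number satisfying N·t = k^{t−1}·n^t. Consequently t · E(q, t·k, t·ℓ) ≥ k^{t−1} · E(q,k,ℓ)^t. -/

import Mathlib

/-- A `(q,k)`-colouring of `n` eBugs is `ℓ`-valid if its `ℓ`-window map is injective. -/
def ebugValid (q k ℓ n : ℕ) (c : Fin n → ZMod k → Fin q) : Prop :=
  Function.Injective (fun p : Fin n × ZMod k => fun s : Fin ℓ => c p.1 (p.2 + (s : ℕ)))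

/-- The eBug number `E(q,k,ℓ)`: the greatest `n` admitting an `ℓ`-valid `(q,k)`-colouring. -/
noncomputable def eBugNumber (q k ℓ : ℕ) : ℕ :=
  sSup {n : ℕ | ∃ c : Fin n → ZMod k → Fin q, ebugValid q k ℓ n c}

set_option linter.unusedSectionVars false
set_option linter.unusedVariables false

namespace Stmt12aux

variable {q k ℓ t n : ℕ}

/-- State space: t-tuples of (bug, offset). -/
abbrev X (k t n : ℕ) := Fin t → Fin n × ZMod k

variable [NeZero t] [NeZero k]

def idx (a : ℕ) : Fin t := ⟨a % t, Nat.mod_lt _ (Nat.pos_of_ne_zero (NeZero.ne t))⟩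

def sig (x : X k t n) : X k t n :=
  fun r => if h : r.val + 1 < t then x ⟨r.val + 1, h⟩ else ((x 0).1, ((x 0).2 + 1))

def f (c : Fin n → ZMod k → Fin q) (x : X k t n) (m : ℕ) : Fin q :=
  c (x (idx (m))).1 ((x (idx m)).2 + ((m / t : ℕ) : ZMod k))

lemma tpos : 0 < t := Nat.pos_of_ne_zero (NeZero.ne t)

lemma md1 {m : ℕ} (h : m % t + 1 < t) : (m + 1) % t = m % t + 1 ∧ (m + 1) / t = m / t := by
  have hm : m % t + t * (m / t) = m := Nat.mod_add_div m t
  constructor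
  · have : (m + 1) = (m % t + 1) + t * (m / t) := by omega
    rw [this, Nat.add_mul_mod_self_left, Nat.mod_eq_of_lt h]
  · have : (m + 1) = (m % t + 1) + t * (m / t) := by omega
    rw [this, Nat.add_mul_div_left _ _ (tpos), Nat.div_eq_of_lt h, zero_add]

lemma md2 {m : ℕ} (h : ¬ m % t + 1 < t) : (m + 1) % t = 0 ∧ (m + 1) / t = m / t + 1 := by
  have hlt : m % t < t := Nat.mod_lt _ tpos
  have he : m % t + 1 = t := by omega
  have hm : m % t + t * (m / t) = m := Nat.mod_add_div m t
  have : (m + 1) = t * (m / t + 1) := by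
    rw [Nat.mul_add, mul_one]; omega
  rw [this, Nat.mul_mod_right, Nat.mul_div_cancel_left _ (tpos)]
  exact ⟨rfl, rfl⟩

lemma idx_val (a : ℕ) : (idx a : Fin t).val = a % t := rfl

lemma fshift1 (c : Fin n → ZMod k → Fin q) (x : X k t n) (m : ℕ) :
    f c (sig x) m = f c x (m + 1) := by
  by_cases h : m % t + 1 < t
  · obtain ⟨h1, h2⟩ := md1 h
    have h0 : (idx (m + 1) : Fin t) = ⟨m % t + 1, h⟩ := Fin.ext (by simp [idx, h1])
    unfold f
    rw [h0, h2]
    show c ((sig x) (idx m)).1 (((sig x) (idx m)).2 + _) = _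
    simp only [sig, dif_pos (show (idx m : Fin t).val + 1 < t from h)]
    rfl
  · obtain ⟨h1, h2⟩ := md2 h
    have h0 : (idx (m + 1) : Fin t) = 0 := Fin.ext (by simp [idx, h1])
    unfold f
    rw [h0, h2]
    show c ((sig x) (idx m)).1 (((sig x) (idx m)).2 + _) = _
    simp only [sig, dif_neg (show ¬ ((idx m : Fin t).val + 1 < t) from h)]
    have : ((x 0).2 + 1) + ((m / t : ℕ) : ZMod k) = (x 0).2 + ((m / t + 1 : ℕ) : ZMod k) := by
      push_cast; ring
    rw [this]

lemma fshift (c : Fin n → ZMod k → Fin q) (x : X k t n) (m a : ℕ) :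
    f c (sig^[m] x) a = f c x (a + m) := by
  induction m generalizing x a with
  | zero => simp
  | succ m ih =>
      rw [Function.iterate_succ_apply, ih, fshift1]
      ring_nf

lemma fper (c : Fin n → ZMod k → Fin q) (x : X k t n) (m : ℕ) :
    f c x (m + t * k) = f c x m := by
  unfold f idx
  simp only [Nat.add_mul_mod_self_left, Nat.add_mul_div_left _ _ (tpos : (0:ℕ) < t)]
  push_cast
  rw [ZMod.natCast_self]
  ring_nf

lemma fmod (c : Fin n → ZMod k → Fin q) (x : X k t n) (m : ℕ) :
    f c x m = f c x (m % (t * k)) := by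
  have key : ∀ j a, f c x (a + (t * k) * j) = f c x a := by
    intro j
    induction j with
    | zero => simp
    | succ j ih =>
        intro a
        have : a + t * k * (j + 1) = (a + t * k * j) + t * k := by ring
        rw [this, fper, ih]
  conv_lhs => rw [← Nat.mod_add_div m (t * k)]
  rw [key]

lemma fcongr (c : Fin n → ZMod k → Fin q) (x : X k t n) {a b : ℕ}
    (h : a % (t * k) = b % (t * k)) : f c x a = f c x b := by
  rw [fmod c x a, fmod c x b, h]


lemma sig_pow (x : X k t n) (m : ℕ) (r : Fin t) :
    sig^[m] x r = ((x (idx (r.val + m))).1,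
      (x (idx (r.val + m))).2 + (((r.val + m) / t : ℕ) : ZMod k)) := by
  induction m generalizing x with
  | zero =>
      have h0 : (idx (r.val + 0) : Fin t) = r := Fin.ext (by simp [idx, Nat.mod_eq_of_lt r.isLt])
      rw [h0]
      simp [Nat.div_eq_of_lt r.isLt]
  | succ m ih =>
      rw [Function.iterate_succ_apply, ih (sig x)]
      by_cases h : (r.val + m) % t + 1 < t
      · obtain ⟨h1, h2⟩ := md1 h
        have h0 : (idx (r.val + (m + 1)) : Fin t) = ⟨(r.val + m) % t + 1, h⟩ :=
          Fin.ext (by simp [idx, ← Nat.add_assoc, h1])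
        rw [h0, show r.val + (m + 1) = (r.val + m) + 1 by ring, h2]
        show ((sig x (idx (r.val + m))).1, (sig x (idx (r.val + m))).2 + _) = _
        simp only [sig, dif_pos (show (idx (r.val + m) : Fin t).val + 1 < t from h)]
        rfl
      · obtain ⟨h1, h2⟩ := md2 h
        have h0 : (idx (r.val + (m + 1)) : Fin t) = 0 :=
          Fin.ext (by simp [idx, ← Nat.add_assoc, h1])
        rw [h0, show r.val + (m + 1) = (r.val + m) + 1 by ring, h2]
        show ((sig x (idx (r.val + m))).1, (sig x (idx (r.val + m))).2 + _) = _
        simp only [sig, dif_neg (show ¬ ((idx (r.val + m) : Fin t).val + 1 < t) from h)]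
        have : ((x 0).2 + 1) + (((r.val + m) / t : ℕ) : ZMod k)
            = (x 0).2 + (((r.val + m) / t + 1 : ℕ) : ZMod k) := by push_cast; ring
        rw [this]

lemma sig_tk (x : X k t n) : sig^[t * k] x = x := by
  funext r
  rw [sig_pow]
  have h0 : (idx (r.val + t * k) : Fin t) = r :=
    Fin.ext (by simp [idx, Nat.add_mul_mod_self_left, Nat.mod_eq_of_lt r.isLt])
  have h1 : (r.val + t * k) / t = k := by
    rw [Nat.add_mul_div_left _ _ (tpos : (0:ℕ) < t), Nat.div_eq_of_lt r.isLt, zero_add]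
  rw [h0, h1, ZMod.natCast_self, add_zero]

lemma sig_tk_mul (j : ℕ) (x : X k t n) : sig^[t * k * j] x = x := by
  induction j with
  | zero => simp
  | succ j ih =>
      rw [show t * k * (j + 1) = t * k * j + t * k by ring, Function.iterate_add_apply,
        sig_tk, ih]

lemma sig_inj : Function.Injective (sig : X k t n → X k t n) := by
  have h : Function.LeftInverse (sig^[t * k - 1]) (sig : X k t n → X k t n) := by
    intro x
    rw [← Function.iterate_succ_apply, Nat.succ_eq_add_one,
      Nat.sub_add_cancel (Nat.one_le_iff_ne_zero.mpr (NeZero.ne (t * k)) : 1 ≤ t * k)]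
    exact sig_tk x
  exact h.injective

lemma sum_div (t : ℕ) (ht : 0 < t) (m : ℕ) : ∑ r ∈ Finset.range t, (r + m) / t = m := by
  induction m with
  | zero => exact Finset.sum_eq_zero fun r hr => Nat.div_eq_of_lt (by simpa using Finset.mem_range.mp hr)
  | succ m ih =>
      have h1 : ∑ r ∈ Finset.range (t + 1), (r + m) / t
          = (∑ r ∈ Finset.range t, (r + 1 + m) / t) + (0 + m) / t :=
        Finset.sum_range_succ' _ _
      have h2 : ∑ r ∈ Finset.range (t + 1), (r + m) / t
          = (∑ r ∈ Finset.range t, (r + m) / t) + (t + m) / t :=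
        Finset.sum_range_succ _ _
      have h3 : (t + m) / t = m / t + 1 := by
        rw [Nat.add_comm t m, Nat.add_div_right _ ht]
      have h4 : ∑ r ∈ Finset.range t, (r + (m + 1)) / t
          = ∑ r ∈ Finset.range t, (r + 1 + m) / t := by
        apply Finset.sum_congr rfl; intro r _; ring_nf
      simp only [zero_add] at h1
      omega

open Fin.NatCast in
lemma free {x : X k t n} {m : ℕ} (htk : t ∣ k) (hx : sig^[m] x = x) : (t * k) ∣ m := by
  have hsum : ∀ r : Fin t, x r = ((x (idx (r.val + m))).1,
      (x (idx (r.val + m))).2 + (((r.val + m) / t : ℕ) : ZMod k)) := by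
    intro r; rw [← sig_pow, hx]
  -- sum of second components
  have hidx : ∀ r : Fin t, (idx (r.val + m) : Fin t) = r + (m : Fin t) := by
    intro r
    apply Fin.ext
    simp [idx, Fin.add_def, Fin.val_natCast, Nat.add_mod]
  have hs : ∑ r : Fin t, (x r).2
      = (∑ r : Fin t, (x (r + (m : Fin t))).2) + ∑ r : Fin t, (((r.val + m) / t : ℕ) : ZMod k) := by
    rw [← Finset.sum_add_distrib]
    apply Finset.sum_congr rfl
    intro r _
    conv_lhs => rw [hsum r]
    rw [hidx r]
  have hre : ∑ r : Fin t, (x (r + (m : Fin t))).2 = ∑ r : Fin t, (x r).2 :=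
    Fintype.sum_equiv (Equiv.addRight (m : Fin t)) _ _ (fun r => rfl)
  rw [hre, left_eq_add] at hs
  have hcast : ((∑ r : Fin t, (r.val + m) / t : ℕ) : ZMod k) = 0 := by
    push_cast
    exact hs
  have hsum' : ∑ r : Fin t, (r.val + m) / t = m := by
    rw [Fin.sum_univ_eq_sum_range (fun i => (i + m) / t)]
    exact sum_div t tpos m
  rw [hsum'] at hcast
  have hkm : k ∣ m := (ZMod.natCast_eq_zero_iff m k).mp hcast
  have htm : t ∣ m := htk.trans hkm
  obtain ⟨u, hu⟩ := htm
  -- now evaluate at r = 0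
  have h0 := hsum 0
  have hi0 : (idx ((0 : Fin t).val + m) : Fin t) = 0 := by
    apply Fin.ext
    simp [idx, hu, Nat.mul_mod_right]
  have hd0 : ((0 : Fin t).val + m) / t = u := by
    simp [hu, Nat.mul_div_cancel_left _ (tpos : (0:ℕ) < t)]
  rw [hi0, hd0] at h0
  have : ((u : ℕ) : ZMod k) = 0 := by
    have := congrArg Prod.snd h0
    simp only at this
    exact (left_eq_add.mp this)
  have hku : k ∣ u := (ZMod.natCast_eq_zero_iff u k).mp this
  obtain ⟨v, hv⟩ := hku
  exact ⟨v, by rw [hu, hv]; ring⟩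

lemma free' {x : X k t n} {a b : ℕ} (htk : t ∣ k) (ha : a < t * k) (hb : b < t * k)
    (h : sig^[a] x = sig^[b] x) : a = b := by
  rcases le_total a b with hab | hab
  · have : sig^[b - a] (sig^[a] x) = sig^[a] x := by
      rw [← Function.iterate_add_apply, Nat.sub_add_cancel hab, h]
    have hd := free htk this
    have : b - a = 0 := Nat.eq_zero_of_dvd_of_lt hd (by omega) |>.symm ▸ rfl
    omega
  · have : sig^[a - b] (sig^[b] x) = sig^[b] x := by
      rw [← Function.iterate_add_apply, Nat.sub_add_cancel hab, ← h]
    have hd := free htk this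
    have : a - b = 0 := Nat.eq_zero_of_dvd_of_lt hd (by omega) |>.symm ▸ rfl
    omega


lemma recon {c : Fin n → ZMod k → Fin q} (hc : ebugValid q k ℓ n c) {u v : X k t n}
    (h : ∀ a, a < t * ℓ → f c u a = f c v a) : u = v := by
  funext r
  have key : ∀ (w : X k t n) (s : Fin ℓ), f c w (r.val + s.val * t)
      = c (w r).1 ((w r).2 + ((s.val : ℕ) : ZMod k)) := by
    intro w s
    unfold f
    have h0 : (idx (r.val + s.val * t) : Fin t) = r := by
      apply Fin.ext
      simp [idx, Nat.add_mul_mod_self_right, Nat.mod_eq_of_lt r.isLt]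
    have h1 : (r.val + s.val * t) / t = s.val := by
      rw [Nat.add_mul_div_right _ _ (tpos : (0:ℕ) < t), Nat.div_eq_of_lt r.isLt, zero_add]
    rw [h0, h1]
  have hlt : ∀ s : Fin ℓ, r.val + s.val * t < t * ℓ := by
    intro s
    calc r.val + s.val * t < t + s.val * t := by omega
    _ = (s.val + 1) * t := by ring
    _ ≤ ℓ * t := Nat.mul_le_mul_right t s.isLt
    _ = t * ℓ := Nat.mul_comm _ _
  have hw : (fun s : Fin ℓ => c (u r).1 ((u r).2 + ((s : ℕ) : ZMod k)))
      = (fun s : Fin ℓ => c (v r).1 ((v r).2 + ((s : ℕ) : ZMod k))) := by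
    funext s
    rw [← key u s, ← key v s]
    exact h _ (hlt s)
  have := hc (a₁ := ((u r).1, (u r).2)) (a₂ := ((v r).1, (v r).2)) hw
  rw [Prod.ext_iff] at this
  exact Prod.ext this.1 this.2

/-- orbit relation -/
def rel (x y : X k t n) : Prop := ∃ m, sig^[m] x = y

lemma rel_equiv : Equivalence (rel : X k t n → X k t n → Prop) := by
  constructor
  · exact fun x => ⟨0, rfl⟩
  · rintro x y ⟨m, rfl⟩
    refine ⟨t * k * (m + 1) - m, ?_⟩
    rw [← Function.iterate_add_apply]
    have hm : m + 1 ≤ t * k * (m + 1) :=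
      Nat.le_mul_of_pos_left _ (Nat.pos_of_ne_zero (NeZero.ne (t * k)))
    rw [show t * k * (m + 1) - m + m = t * k * (m + 1) by omega]
    exact sig_tk_mul _ x
  · rintro x y z ⟨m, rfl⟩ ⟨m', rfl⟩
    exact ⟨m' + m, (Function.iterate_add_apply _ _ _ _)⟩

def st (k t n : ℕ) [NeZero t] [NeZero k] : Setoid (X k t n) := ⟨rel, rel_equiv⟩

end Stmt12aux

open Stmt12aux in
lemma stmt12_main (q k ℓ t n N : ℕ) (hk : 1 ≤ k) (ht : 1 ≤ t) (htk : t ∣ k)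
    (hN : N * t = k ^ (t - 1) * n ^ t)
    (c : Fin n → ZMod k → Fin q) (hc : ebugValid q k ℓ n c) :
    ∃ c' : Fin N → ZMod (t * k) → Fin q, ebugValid q (t * k) (t * ℓ) N c' := by
  classical
  haveI : NeZero t := ⟨by omega⟩
  haveI : NeZero k := ⟨by omega⟩
  haveI : NeZero (t * k) := ⟨by positivity⟩
  set Q := Quotient (st k t n) with hQ
  haveI : Finite Q := Quotient.finite _
  haveI : Fintype Q := Fintype.ofFinite Q
  -- the counting bijection
  set g : Q × Fin (t * k) → X k t n := fun p => sig^[p.2.val] p.1.out with hg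
  have hbij : Function.Bijective g := by
    constructor
    · rintro ⟨o, j⟩ ⟨o', j'⟩ hgo
      simp only [hg] at hgo
      have hoo : o = o' := by
        have h1 : rel o.out o'.out := by
          refine Setoid.trans' (st k t n) (⟨j.val, rfl⟩ : rel o.out _) ?_
          rw [hgo]
          exact Setoid.symm' (st k t n) ⟨j'.val, rfl⟩
        have := Quotient.sound (s := st k t n) h1
        rwa [Quotient.out_eq, Quotient.out_eq] at this
      subst hoo
      have := free' htk j.isLt j'.isLt hgo
      exact Prod.ext rfl (Fin.ext this)
    · intro x
      obtain ⟨m, hm⟩ : rel (Quotient.mk (st k t n) x).out x :=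
        Quotient.exact (Quotient.out_eq (Quotient.mk (st k t n) x))
      refine ⟨⟨Quotient.mk (st k t n) x, ⟨m % (t * k), Nat.mod_lt _ (by positivity)⟩⟩, ?_⟩
      simp only [hg]
      conv_rhs => rw [← hm, ← Nat.mod_add_div m (t * k)]
      rw [Function.iterate_add_apply, sig_tk_mul]
  have hcard : Fintype.card Q * (t * k) = (n * k) ^ t := by
    have h1 := Fintype.card_of_bijective hbij
    rw [Fintype.card_prod, Fintype.card_fin] at h1
    rw [h1, Fintype.card_fun, Fintype.card_prod, Fintype.card_fin, Fintype.card_fin,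
      ZMod.card]
  have hcardN : Fintype.card Q = N := by
    have h2 : N * (t * k) = (n * k) ^ t := by
      rw [← Nat.mul_assoc, hN, mul_pow]
      have : t - 1 + 1 = t := by omega
      calc k ^ (t - 1) * n ^ t * k = n ^ t * k ^ (t - 1 + 1) := by ring
      _ = n ^ t * k ^ t := by rw [this]
    exact Nat.eq_of_mul_eq_mul_right (show 0 < t * k by positivity) (by rw [hcard, h2])
  have e2 : Fin N ≃ Q := Fintype.equivOfCardEq (by rw [Fintype.card_fin, hcardN])
  refine ⟨fun i j => f c (e2 i).out j.val, ?_⟩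
  rintro ⟨i, j⟩ ⟨i', j'⟩ hw
  simp only at hw
  -- transform windows
  have hval : ∀ (jj : ZMod (t * k)) (s : Fin (t * ℓ)) (x : X k t n),
      f c x ((jj + ((s : ℕ) : ZMod (t * k))).val) = f c (sig^[jj.val] x) s.val := by
    intro jj s x
    rw [fshift]
    apply fcongr
    rw [ZMod.val_add, ZMod.val_natCast]
    rw [Nat.mod_mod]
    conv_rhs => rw [Nat.add_comm, Nat.add_mod]
    rw [Nat.add_mod jj.val ((s : ℕ) % (t * k)), Nat.mod_mod]
  have hw' : ∀ s : Fin (t * ℓ),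
      f c (sig^[j.val] (e2 i).out) s.val = f c (sig^[j'.val] (e2 i').out) s.val := by
    intro s
    have := congrFun hw s
    rw [← hval j s, ← hval j' s]
    exact this
  have hxy : sig^[j.val] (e2 i).out = sig^[j'.val] (e2 i').out := by
    apply recon hc
    intro a ha
    have := hw' ⟨a, ha⟩
    exact this
  have hii : i = i' := by
    apply e2.injective
    have h1 : rel (e2 i).out (e2 i').out := by
      refine Setoid.trans' (st k t n) (⟨j.val, rfl⟩ : rel (e2 i).out _) ?_
      rw [hxy]
      exact Setoid.symm' (st k t n) ⟨j'.val, rfl⟩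
    have := Quotient.sound (s := st k t n) h1
    rwa [Quotient.out_eq, Quotient.out_eq] at this
  subst hii
  have hjj : j = j' := by
    have := free' htk (ZMod.val_lt j) (ZMod.val_lt j') hxy
    exact ZMod.val_injective _ this
  rw [hjj]

open Stmt12aux


lemma ebug_bdd (q k ℓ : ℕ) (hk : 1 ≤ k) :
    BddAbove {n : ℕ | ∃ c : Fin n → ZMod k → Fin q, ebugValid q k ℓ n c} := by
  haveI : NeZero k := ⟨by omega⟩
  refine ⟨q ^ ℓ, fun m hm => ?_⟩
  obtain ⟨c, hc⟩ := hm
  have h1 : Fintype.card (Fin m × ZMod k) ≤ Fintype.card (Fin ℓ → Fin q) :=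
    Fintype.card_le_of_injective _ hc
  rw [Fintype.card_prod, Fintype.card_fin, ZMod.card, Fintype.card_fun,
    Fintype.card_fin, Fintype.card_fin] at h1
  calc m ≤ m * k := Nat.le_mul_of_pos_right _ (by omega)
  _ ≤ q ^ ℓ := h1

lemma ebug_zero (q k ℓ : ℕ) :
    (0 : ℕ) ∈ {n : ℕ | ∃ c : Fin n → ZMod k → Fin q, ebugValid q k ℓ n c} :=
  ⟨fun i => i.elim0, fun p => p.1.elim0⟩

theorem stmt12 (q k ℓ t n : ℕ) (hq : 1 ≤ q) (hk : 1 ≤ k) (hℓ : 1 ≤ ℓ) (ht : 1 ≤ t)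
    (hn : 1 ≤ n) (htk : t ∣ k)
    (h : ∃ c : Fin n → ZMod k → Fin q, ebugValid q k ℓ n c) :
    (∀ N : ℕ, N * t = k ^ (t - 1) * n ^ t →
      ∃ c : Fin N → ZMod (t * k) → Fin q, ebugValid q (t * k) (t * ℓ) N c) ∧
    k ^ (t - 1) * eBugNumber q k ℓ ^ t ≤ t * eBugNumber q (t * k) (t * ℓ) := by
  obtain ⟨c, hc⟩ := h
  constructor
  · intro N hN
    exact stmt12_main q k ℓ t n N hk ht htk hN c hc
  · set S := {n : ℕ | ∃ c : Fin n → ZMod k → Fin q, ebugValid q k ℓ n c} with hS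
    set E := eBugNumber q k ℓ with hE
    have hmem : E ∈ S := Nat.sSup_mem ⟨0, ebug_zero q k ℓ⟩ (ebug_bdd q k ℓ hk)
    obtain ⟨cE, hcE⟩ := hmem
    have hdvd : t ∣ k ^ (t - 1) * E ^ t := by
      by_cases h1 : t = 1
      · rw [h1]; exact one_dvd _
      · exact Dvd.dvd.mul_right (htk.trans (dvd_pow_self k (by omega))) _
    set N' := k ^ (t - 1) * E ^ t / t with hN'
    have hNt : N' * t = k ^ (t - 1) * E ^ t := Nat.div_mul_cancel hdvd
    obtain ⟨c', hc'⟩ := stmt12_main q k ℓ t E N' hk ht htk hNt cE hcE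
    have hle : N' ≤ eBugNumber q (t * k) (t * ℓ) :=
      le_csSup (ebug_bdd q (t * k) (t * ℓ) (Nat.mul_pos ht hk)) ⟨c', hc'⟩
    calc k ^ (t - 1) * E ^ t = N' * t := hNt.symm
    _ ≤ eBugNumber q (t * k) (t * ℓ) * t := Nat.mul_le_mul_right t hle
    _ = t * eBugNumber q (t * k) (t * ℓ) := Nat.mul_comm _ _
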